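/- arXiv:2206.02445 — 2 statements merged into one kernel-verified Lean document; each statement's English description precedes it below -/
import Mathlib

section
/- For B ≠ 0 and any constant C, the function y(x) = ln(2B²/cosh²(Bx + C)) satisfies the differential equation e^{-y(x)} y''(x) + 1 = 0 for all real x. -/
theorem stmt1 (B C : ℝ) (hB : B ≠ 0) (y : ℝ → ℝ)
    (hy : y = fun x => Real.log (2 * B ^ 2 / Real.cosh (B * x + C) ^ 2)) :
    ∀ x : ℝ, Real.exp (-(y x)) * deriv (deriv y) x + 1 = 0 := by
  have hcoshpos : ∀ t : ℝ, 0 < Real.cosh t := fun t => Real.cosh_pos t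
  have hu : ∀ x : ℝ, HasDerivAt (fun x : ℝ => B * x + C) B x := by
    intro x
    simpa using ((hasDerivAt_id x).const_mul B).add_const C
  have hy1 : deriv y = fun x => -2 * B * (Real.sinh (B * x + C) / Real.cosh (B * x + C)) := by
    funext x
    have hne : Real.cosh (B * x + C) ≠ 0 := (hcoshpos _).ne'
    have hlog : HasDerivAt (fun x : ℝ => Real.log (Real.cosh (B * x + C)))
        (Real.sinh (B * x + C) * B / Real.cosh (B * x + C)) x :=
      (((Real.hasDerivAt_cosh _).comp x (hu x))).log hne
    have hyd : HasDerivAt y (-2 * B * (Real.sinh (B * x + C) / Real.cosh (B * x + C))) x := by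
      have heq : y = fun x => Real.log (2 * B ^ 2) - 2 * Real.log (Real.cosh (B * x + C)) := by
        funext t
        simp only [hy]
        have h2 : (2 : ℝ) * B ^ 2 ≠ 0 := by positivity
        have hn : Real.cosh (B * t + C) ^ 2 ≠ 0 := pow_ne_zero 2 (hcoshpos _).ne'
        rw [Real.log_div h2 hn, Real.log_pow]
        push_cast; ring
      rw [heq]
      have := (hlog.const_mul (2 : ℝ)).const_sub (Real.log (2 * B ^ 2))
      refine this.congr_deriv ?_
      ring
    exact hyd.deriv
  intro x
  have hne : Real.cosh (B * x + C) ≠ 0 := (hcoshpos _).ne'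
  have hd2 : HasDerivAt (deriv y) (-2 * B ^ 2 / Real.cosh (B * x + C) ^ 2) x := by
    rw [hy1]
    have hs : HasDerivAt (fun x : ℝ => Real.sinh (B * x + C)) (Real.cosh (B * x + C) * B) x :=
      (Real.hasDerivAt_sinh _).comp x (hu x)
    have hc : HasDerivAt (fun x : ℝ => Real.cosh (B * x + C)) (Real.sinh (B * x + C) * B) x :=
      (Real.hasDerivAt_cosh _).comp x (hu x)
    have hdiv := (hs.div hc hne).const_mul (-2 * B)
    refine hdiv.congr_deriv ?_
    have hpyth := Real.cosh_sq_sub_sinh_sq (B * x + C)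
    field_simp
    nlinarith [hpyth]
  rw [hd2.deriv, hy]
  have h2 : (2 : ℝ) * B ^ 2 ≠ 0 := by positivity
  have hn : Real.cosh (B * x + C) ^ 2 ≠ 0 := pow_ne_zero 2 hne
  have hpos : 0 < 2 * B ^ 2 / Real.cosh (B * x + C) ^ 2 := by positivity
  simp only
  rw [Real.exp_neg, Real.exp_log hpos]
  field_simp
  ring
end

section
/- The equation tanh(B/2) = 2/B has a unique solution B* in (2, ∞), and for symmetric boundary data ȳ, the equation cosh(B/2) = √2 B e^{-ȳ/2} in B > 0 has exactly two solutions when ȳ < 2 ln(2√2/sinh(B*/2)), exactly one when ȳ equals this value, and none when ȳ exceeds it. -/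
open Real
noncomputable def Gf (u : ℝ) : ℝ := u * Real.sinh u - Real.cosh u

lemma Gf_hasDeriv (u : ℝ) : HasDerivAt Gf (u * Real.cosh u) u := by
  have h1 : HasDerivAt (fun u : ℝ => u * Real.sinh u) (1 * Real.sinh u + u * Real.cosh u) u :=
    (hasDerivAt_id u).mul (Real.hasDerivAt_sinh u)
  have := h1.sub (Real.hasDerivAt_cosh u)
  exact this.congr_deriv (by ring)

lemma Gf_strictMonoOn : StrictMonoOn Gf (Set.Ici 0) := by
  apply strictMonoOn_of_deriv_pos (convex_Ici 0)
  · exact fun u _ => ((Gf_hasDeriv u).continuousAt).continuousWithinAt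
  · intro u hu
    rw [interior_Ici] at hu
    rw [(Gf_hasDeriv u).deriv]
    exact mul_pos hu (Real.cosh_pos u)

lemma Gf_one_neg : Gf 1 < 0 := by
  simp only [Gf, one_mul, sub_neg]
  exact Real.sinh_lt_cosh 1

lemma Gf_two_pos : 0 < Gf 2 := by
  simp only [Gf, Real.sinh_eq, Real.cosh_eq]
  have h1 : (3:ℝ) ≤ Real.exp 2 := by nlinarith [Real.add_one_le_exp (2:ℝ)]
  have h2 : Real.exp (-2) * Real.exp 2 = 1 := by
    rw [← Real.exp_add]; norm_num
  nlinarith [Real.exp_pos (-2:ℝ), Real.exp_pos (2:ℝ)]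

lemma Gf_root : ∃ u : ℝ, 1 < u ∧ u < 2 ∧ Gf u = 0 := by
  have hcont : ContinuousOn Gf (Set.Icc 1 2) :=
    fun u _ => ((Gf_hasDeriv u).continuousAt).continuousWithinAt
  have := intermediate_value_Icc (by norm_num : (1:ℝ) ≤ 2) hcont
  have h0 : (0:ℝ) ∈ Set.Icc (Gf 1) (Gf 2) := ⟨Gf_one_neg.le, Gf_two_pos.le⟩
  obtain ⟨u, hu, hgu⟩ := this h0
  refine ⟨u, ?_, ?_, hgu⟩
  · rcases lt_or_eq_of_le hu.1 with h | h
    · exact h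
    · exfalso; rw [← h] at hgu; exact Gf_one_neg.ne hgu
  · rcases lt_or_eq_of_le hu.2 with h | h
    · exact h
    · exfalso; rw [h] at hgu; exact Gf_two_pos.ne.symm hgu

noncomputable def Ff (u : ℝ) : ℝ := Real.cosh u / u

lemma Ff_hasDeriv {u : ℝ} (hu : u ≠ 0) : HasDerivAt Ff (Gf u / u ^ 2) u := by
  have := (Real.hasDerivAt_cosh u).div (hasDerivAt_id u) hu
  exact this.congr_deriv (by simp only [Gf, id, mul_one]; ring)

lemma Ff_contOn : ContinuousOn Ff (Set.Ioi 0) :=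
  fun u hu => ((Ff_hasDeriv (ne_of_gt hu)).continuousAt).continuousWithinAt

lemma Ff_strictAntiOn {w : ℝ} (hw : 0 < w) (hgw : Gf w = 0) :
    StrictAntiOn Ff (Set.Ioc 0 w) := by
  apply strictAntiOn_of_deriv_neg (convex_Ioc 0 w)
  · exact Ff_contOn.mono (fun x hx => hx.1)
  · intro u hu
    rw [interior_Ioc] at hu
    rw [(Ff_hasDeriv (ne_of_gt hu.1)).deriv]
    apply div_neg_of_neg_of_pos _ (pow_pos hu.1 2)
    have := Gf_strictMonoOn (Set.mem_Ici.2 hu.1.le) (Set.mem_Ici.2 hw.le) hu.2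
    rwa [hgw] at this

lemma Ff_strictMonoOn {w : ℝ} (hw : 0 < w) (hgw : Gf w = 0) :
    StrictMonoOn Ff (Set.Ici w) := by
  apply strictMonoOn_of_deriv_pos (convex_Ici w)
  · exact Ff_contOn.mono (fun x hx => lt_of_lt_of_le hw hx)
  · intro u hu
    rw [interior_Ici] at hu
    rw [(Ff_hasDeriv (ne_of_gt (hw.trans hu))).deriv]
    apply div_pos _ (pow_pos (hw.trans hu) 2)
    have := Gf_strictMonoOn (Set.mem_Ici.2 hw.le) (Set.mem_Ici.2 (hw.trans hu).le) hu
    rwa [hgw] at this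

lemma Ff_min {w : ℝ} (hw : 0 < w) (hgw : Gf w = 0) {u : ℝ} (hu : 0 < u) :
    Ff w ≤ Ff u := by
  rcases le_or_gt u w with h | h
  · rcases eq_or_lt_of_le h with h' | h'
    · rw [h']
    · exact (Ff_strictAntiOn hw hgw ⟨hu, h⟩ ⟨hw, le_refl w⟩ h').le
  · exact (Ff_strictMonoOn hw hgw (Set.mem_Ici.2 (le_refl w)) (Set.mem_Ici.2 h.le) h).le

lemma Ff_ge_inv {u : ℝ} (hu : 0 < u) : 1 / u ≤ Ff u := by
  unfold Ff
  gcongr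
  exact Real.one_le_cosh u

lemma Ff_ge_lin {u : ℝ} (hu : 0 < u) : u / 8 ≤ Ff u := by
  have h1 : u / 2 + 1 ≤ Real.exp (u / 2) := Real.add_one_le_exp _
  have h2 : Real.exp (u / 2) * Real.exp (u / 2) = Real.exp u := by
    rw [← Real.exp_add]; ring_nf
  have h3 : Real.exp (-u) > 0 := Real.exp_pos _
  rw [Ff, Real.cosh_eq, div_le_div_iff₀ (by norm_num) hu]
  nlinarith [Real.exp_pos u]

lemma two_roots {w c : ℝ} (hw : 0 < w) (hgw : Gf w = 0) (hc : Ff w < c) :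
    ∃ u₁ u₂ : ℝ, 0 < u₁ ∧ 0 < u₂ ∧ u₁ ≠ u₂ ∧ Ff u₁ = c ∧ Ff u₂ = c ∧
      ∀ u : ℝ, 0 < u → Ff u = c → u = u₁ ∨ u = u₂ := by
  have hc0 : 0 < c := lt_of_le_of_lt (le_trans (by positivity) (Ff_ge_inv hw)) hc
  -- left root
  set a : ℝ := min w (1/c) with ha
  have ha0 : 0 < a := lt_min hw (by positivity)
  have haw : a ≤ w := min_le_left _ _
  have hFa : c ≤ Ff a := by
    have : 1 / a ≥ c := by
      have h1 : a ≤ 1 / c := min_le_right _ _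
      rw [ge_iff_le, le_div_iff₀ ha0]
      calc c * a ≤ c * (1/c) := by gcongr
        _ = 1 := by field_simp
    exact le_trans this (Ff_ge_inv ha0)
  obtain ⟨u₁, hu₁mem, hu₁⟩ := intermediate_value_Icc' haw
    (Ff_contOn.mono (fun x hx => lt_of_lt_of_le ha0 hx.1)) ⟨hc.le, hFa⟩
  -- right root
  set b : ℝ := max w (8*c) with hb
  have hwb : w ≤ b := le_max_left _ _
  have hb0 : 0 < b := lt_of_lt_of_le hw hwb
  have hFb : c ≤ Ff b := by
    have : c ≤ b / 8 := by
      have := le_max_right w (8*c); linarith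
    exact le_trans this (Ff_ge_lin hb0)
  obtain ⟨u₂, hu₂mem, hu₂⟩ := intermediate_value_Icc hwb
    (Ff_contOn.mono (fun x hx => lt_of_lt_of_le hw hx.1)) ⟨hc.le, hFb⟩
  have hu₁0 : 0 < u₁ := lt_of_lt_of_le ha0 hu₁mem.1
  have hu₁w : u₁ ≤ w := hu₁mem.2
  have hu₂w : w ≤ u₂ := hu₂mem.1
  have hu₁ne : u₁ ≠ w := by
    intro h; rw [h] at hu₁; exact hc.ne hu₁
  have hu₁lt : u₁ < w := lt_of_le_of_ne hu₁w hu₁ne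
  have hu₂ne : w ≠ u₂ := by
    intro h; rw [← h] at hu₂; exact hc.ne hu₂
  have hu₂gt : w < u₂ := lt_of_le_of_ne hu₂w hu₂ne
  refine ⟨u₁, u₂, hu₁0, lt_trans hw hu₂gt, (hu₁lt.trans hu₂gt).ne, hu₁, hu₂, ?_⟩
  intro u hu hFu
  rcases le_or_gt u w with h | h
  · left
    exact (Ff_strictAntiOn hw hgw).injOn ⟨hu, h⟩ ⟨hu₁0, hu₁w⟩ (hFu.trans hu₁.symm)
  · right
    exact (Ff_strictMonoOn hw hgw).injOn (Set.mem_Ici.2 h.le) (Set.mem_Ici.2 hu₂w)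
      (hFu.trans hu₂.symm)

lemma one_root {w c : ℝ} (hw : 0 < w) (hgw : Gf w = 0) (hc : Ff w = c) :
    ∀ u : ℝ, 0 < u → Ff u = c → u = w := by
  intro u hu hFu
  by_contra hne
  rcases lt_or_gt_of_ne hne with h | h
  · have := Ff_strictAntiOn hw hgw ⟨hu, h.le⟩ ⟨hw, le_refl w⟩ h
    rw [hFu, hc] at this; exact lt_irrefl c this
  · have := Ff_strictMonoOn hw hgw (Set.mem_Ici.2 (le_refl w)) (Set.mem_Ici.2 h.le) h
    rw [hFu, hc] at this; exact lt_irrefl c this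

lemma no_root {w c : ℝ} (hw : 0 < w) (hgw : Gf w = 0) (hc : c < Ff w) :
    ∀ u : ℝ, 0 < u → Ff u ≠ c := by
  intro u hu hFu
  have := Ff_min hw hgw hu
  rw [hFu] at this
  exact absurd this (not_le.2 hc)

lemma eq_iff_Ff {B ybar : ℝ} (hB : 0 < B) :
    Real.cosh (B/2) = Real.sqrt 2 * B * Real.exp (-ybar/2) ↔
      Ff (B/2) = 2 * Real.sqrt 2 * Real.exp (-ybar/2) := by
  rw [Ff, div_eq_iff (ne_of_gt (by linarith : (0:ℝ) < B/2))]
  constructor <;> intro h <;> rw [h] <;> ring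

theorem stmt3 :
    ∃! Bstar : ℝ, Bstar ∈ Set.Ioi (2:ℝ) ∧ Real.tanh (Bstar / 2) = 2 / Bstar ∧
      ∀ ybar : ℝ,
        ((ybar < 2 * Real.log (2 * Real.sqrt 2 / Real.sinh (Bstar / 2)) →
          ∃ B₁ B₂ : ℝ, 0 < B₁ ∧ 0 < B₂ ∧ B₁ ≠ B₂ ∧
            Real.cosh (B₁ / 2) = Real.sqrt 2 * B₁ * Real.exp (-ybar / 2) ∧
            Real.cosh (B₂ / 2) = Real.sqrt 2 * B₂ * Real.exp (-ybar / 2) ∧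
            ∀ B : ℝ, 0 < B → Real.cosh (B / 2) = Real.sqrt 2 * B * Real.exp (-ybar / 2) →
              B = B₁ ∨ B = B₂) ∧
        (ybar = 2 * Real.log (2 * Real.sqrt 2 / Real.sinh (Bstar / 2)) →
          ∃! B : ℝ, 0 < B ∧ Real.cosh (B / 2) = Real.sqrt 2 * B * Real.exp (-ybar / 2)) ∧
        (ybar > 2 * Real.log (2 * Real.sqrt 2 / Real.sinh (Bstar / 2)) →
          ¬ ∃ B : ℝ, 0 < B ∧ Real.cosh (B / 2) = Real.sqrt 2 * B * Real.exp (-ybar / 2))) := by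
  obtain ⟨w, hw1, hw2, hgw⟩ := Gf_root
  have hw0 : (0:ℝ) < w := by linarith
  have hcosh : Real.cosh w = w * Real.sinh w := by
    have := hgw; unfold Gf at this; linarith
  have hs : 0 < Real.sinh w := Real.sinh_pos_iff.2 hw0
  have hFw : Ff w = Real.sinh w := by
    rw [Ff, hcosh]; field_simp
  have hhalf : (2*w)/2 = w := by ring
  have hsq2 : (0:ℝ) < Real.sqrt 2 := Real.sqrt_pos.2 (by norm_num)
  -- threshold
  have hkey : 2 * Real.sqrt 2 * Real.exp (-(2 * Real.log (2 * Real.sqrt 2 / Real.sinh w))/2)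
      = Real.sinh w := by
    have h1 : (-(2 * Real.log (2 * Real.sqrt 2 / Real.sinh w))/2)
        = Real.log (Real.sinh w / (2 * Real.sqrt 2)) := by
      rw [Real.log_div hs.ne' (by positivity), Real.log_div (by positivity) hs.ne']
      ring
    rw [h1, Real.exp_log (by positivity)]
    field_simp
  refine ⟨2*w, ⟨by simp [Set.mem_Ioi]; linarith, ?_, ?_⟩, ?_⟩
  · rw [hhalf, Real.tanh_eq_sinh_div_cosh, hcosh]
    rw [div_eq_div_iff (by positivity) (by linarith)]
    ring
  · intro ybar
    rw [hhalf]
    set ytop := 2 * Real.log (2 * Real.sqrt 2 / Real.sinh w) with hytop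
    set c := 2 * Real.sqrt 2 * Real.exp (-ybar/2) with hc
    refine ⟨?_, ?_, ?_⟩
    · -- two solutions
      intro hlt
      have hcgt : Ff w < c := by
        rw [hFw, ← hkey, hc]
        have : Real.exp (-ytop/2) < Real.exp (-ybar/2) := Real.exp_lt_exp.2 (by linarith)
        nlinarith
      obtain ⟨u₁, u₂, hu₁, hu₂, hne, hF₁, hF₂, huniq⟩ := two_roots hw0 hgw hcgt
      refine ⟨2*u₁, 2*u₂, by linarith, by linarith, by intro h; apply hne; linarith, ?_, ?_, ?_⟩
      · rw [eq_iff_Ff (by linarith)]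
        rw [show (2*u₁)/2 = u₁ by ring, hF₁]
      · rw [eq_iff_Ff (by linarith)]
        rw [show (2*u₂)/2 = u₂ by ring, hF₂]
      · intro B hB hEq
        rw [eq_iff_Ff hB] at hEq
        rcases huniq (B/2) (by linarith) hEq with h | h
        · left; linarith
        · right; linarith
    · -- one solution
      intro heq
      have hceq : Ff w = c := by
        rw [hFw, ← hkey, hc, heq]
      refine ⟨2*w, ⟨by linarith, ?_⟩, ?_⟩
      · rw [eq_iff_Ff (by linarith), hhalf, hceq]
      · rintro B ⟨hB, hEq⟩
        rw [eq_iff_Ff hB] at hEq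
        have := one_root hw0 hgw hceq (B/2) (by linarith) hEq
        linarith
    · -- no solution
      intro hgt
      rintro ⟨B, hB, hEq⟩
      rw [eq_iff_Ff hB] at hEq
      have hclt : c < Ff w := by
        rw [hFw, ← hkey, hc]
        have : Real.exp (-ybar/2) < Real.exp (-ytop/2) := Real.exp_lt_exp.2 (by linarith)
        nlinarith
      exact no_root hw0 hgw hclt (B/2) (by linarith) hEq
  · rintro B' ⟨hB'mem, htanh, _⟩
    rw [Set.mem_Ioi] at hB'mem
    have hB'0 : (0:ℝ) < B' := by linarith
    have hv0 : (0:ℝ) < B'/2 := by linarith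
    rw [Real.tanh_eq_sinh_div_cosh, div_eq_div_iff (Real.cosh_pos _).ne' hB'0.ne'] at htanh
    have hGv : Gf (B'/2) = 0 := by
      unfold Gf
      nlinarith [htanh]
    have := Gf_strictMonoOn.injOn (Set.mem_Ici.2 hv0.le) (Set.mem_Ici.2 hw0.le)
      (hGv.trans hgw.symm)
    linarith
end
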